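/- Let R > 0, p ∈ [1, ∞), and let μ, μ̃ be Borel probability measures on ℝ^d supported in the closed ball B̄(R). Then for every z ∈ ℝ^d and every coupling π of μ and μ̃, one has ‖γ(z, μ) − γ(z, μ̃)‖ ≤ (1 + 2R‖z‖) · exp(2R‖z‖ / p) · (∫ ‖x − y‖^p dπ(x, y))^{1/p}. In particular γ(z, ·) is Lipschitz with constant (1 + 2R‖z‖) exp(2R‖z‖/p) with respect to the p-Wasserstein distance on probability measures supported in B̄(R). -/

import Mathlib

open MeasureTheory
open scoped RealInnerProductSpace

/-- The normalisation constant `γ₂(z, μ) = ∫ exp⟨z,y⟩ dμ(y)`. -/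
noncomputable def gamma2 {d : ℕ} (z : EuclideanSpace ℝ (Fin d))
    (μ : Measure (EuclideanSpace ℝ (Fin d))) : ℝ :=
  ∫ y, Real.exp ⟪z, y⟫ ∂μ

/-- The attention map `γ(z, μ) = (∫ exp⟨z,y⟩ • y dμ(y)) / γ₂(z, μ)`. -/
noncomputable def gammaAttn {d : ℕ} (z : EuclideanSpace ℝ (Fin d))
    (μ : Measure (EuclideanSpace ℝ (Fin d))) : EuclideanSpace ℝ (Fin d) :=
  (gamma2 z μ)⁻¹ • ∫ y, Real.exp ⟪z, y⟫ • y ∂μ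

lemma exp_sub_le_aux' {u : ℝ} (hu : 0 ≤ u) : Real.exp u - 1 ≤ (1 + Real.exp u) / 2 * u := by
  set g : ℝ → ℝ := fun u => u + u * Real.exp u - 2 * Real.exp u + 2 with hg
  have hderiv : ∀ x : ℝ, HasDerivAt g (1 + (x - 1) * Real.exp x) x := by
    intro x
    have h1 : HasDerivAt (fun y : ℝ => y * Real.exp y) (1 * Real.exp x + x * Real.exp x) x :=
      (hasDerivAt_id x).mul (Real.hasDerivAt_exp x)
    have h2 : HasDerivAt g (1 + (1 * Real.exp x + x * Real.exp x) - 2 * Real.exp x) x :=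
      (((hasDerivAt_id x).add h1).sub ((Real.hasDerivAt_exp x).const_mul 2)).add_const 2
    convert h2 using 1
    ring
  have hnonneg : ∀ x ∈ interior (Set.Ici (0:ℝ)), 0 ≤ deriv g x := by
    intro x hx
    rw [interior_Ici] at hx
    have hx' : (0:ℝ) < x := hx
    rw [(hderiv x).deriv]
    rcases le_or_gt 1 x with h | h
    · have := Real.exp_pos x
      nlinarith
    · have h3 : 1 - x ≤ Real.exp (-x) := by
        have := Real.add_one_le_exp (-x)
        linarith
      have h4 : (1 - x) * Real.exp x ≤ Real.exp (-x) * Real.exp x :=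
        mul_le_mul_of_nonneg_right h3 (Real.exp_pos x).le
      rw [← Real.exp_add] at h4
      simp at h4
      nlinarith
  have hmono : MonotoneOn g (Set.Ici 0) := by
    apply monotoneOn_of_deriv_nonneg (convex_Ici 0)
    · exact (Continuous.continuousOn (by continuity))
    · intro x hx
      exact (hderiv x).differentiableAt.differentiableWithinAt
    · exact hnonneg
  have h0 : g 0 ≤ g u := hmono (Set.self_mem_Ici) hu hu
  simp [hg] at h0
  nlinarith [h0]

lemma abs_exp_sub_exp_le' (s t : ℝ) :
    |Real.exp s - Real.exp t| ≤ (Real.exp s + Real.exp t) / 2 * |s - t| := by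
  wlog h : t ≤ s generalizing s t
  · have := this t s (le_of_not_ge h)
    rw [abs_sub_comm] at this
    rw [abs_sub_comm s t]
    linarith [this]
  have hu : 0 ≤ s - t := by linarith
  have key := exp_sub_le_aux' hu
  have hes : Real.exp s = Real.exp t * Real.exp (s - t) := by
    rw [← Real.exp_add]; ring_nf
  have het := (Real.exp_pos t).le
  have h1 : Real.exp s - Real.exp t = Real.exp t * (Real.exp (s - t) - 1) := by
    rw [hes]; ring
  have h2 : 0 ≤ Real.exp s - Real.exp t := by
    rw [h1]
    have := Real.one_le_exp hu
    nlinarith [Real.exp_pos t]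
  rw [abs_of_nonneg h2, abs_of_nonneg hu, h1, hes]
  nlinarith [Real.exp_pos t, Real.exp_pos (s - t)]

lemma pointwise_bound' {d : ℕ} {R : ℝ} (z x y c : EuclideanSpace ℝ (Fin d))
    (hx : ‖x‖ ≤ R) (hy : ‖y‖ ≤ R) (hc : ‖c‖ ≤ R) :
    ‖Real.exp ⟪z, x⟫ • (x - c) - Real.exp ⟪z, y⟫ • (y - c)‖ ≤
      (1 + 2 * R * ‖z‖) * ((Real.exp ⟪z, x⟫ + Real.exp ⟪z, y⟫) / 2) * ‖x - y‖ := by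
  set e1 := Real.exp ⟪z, x⟫ with he1
  set e2 := Real.exp ⟪z, y⟫ with he2
  have hid : e1 • (x - c) - e2 • (y - c) =
      ((e1 + e2) / 2) • (x - y) + ((e1 - e2) / 2) • ((x - c) + (y - c)) := by
    module
  have hst : |⟪z, x⟫ - ⟪z, y⟫| ≤ ‖z‖ * ‖x - y‖ := by
    rw [← inner_sub_right]
    exact abs_real_inner_le_norm z (x - y)
  have hE : |e1 - e2| ≤ (e1 + e2) / 2 * (‖z‖ * ‖x - y‖) := by
    calc |e1 - e2| ≤ (e1 + e2) / 2 * |⟪z, x⟫ - ⟪z, y⟫| := abs_exp_sub_exp_le' _ _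
    _ ≤ (e1 + e2) / 2 * (‖z‖ * ‖x - y‖) := by
        apply mul_le_mul_of_nonneg_left hst
        positivity
  have hxc : ‖x - c‖ ≤ 2 * R := by
    calc ‖x - c‖ ≤ ‖x‖ + ‖c‖ := norm_sub_le x c
    _ ≤ 2 * R := by linarith
  have hyc : ‖y - c‖ ≤ 2 * R := by
    calc ‖y - c‖ ≤ ‖y‖ + ‖c‖ := norm_sub_le y c
    _ ≤ 2 * R := by linarith
  have hR0 : 0 ≤ R := le_trans (norm_nonneg x) hx
  rw [hid]
  have h1 : ‖((e1 + e2) / 2) • (x - y) + ((e1 - e2) / 2) • ((x - c) + (y - c))‖ ≤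
      ‖((e1 + e2) / 2) • (x - y)‖ + ‖((e1 - e2) / 2) • ((x - c) + (y - c))‖ := norm_add_le _ _
  have h2 : ‖((e1 + e2) / 2) • (x - y)‖ = ((e1 + e2) / 2) * ‖x - y‖ := by
    rw [norm_smul, Real.norm_eq_abs, abs_of_nonneg (by positivity)]
  have h3 : ‖((e1 - e2) / 2) • ((x - c) + (y - c))‖ ≤ |e1 - e2| / 2 * (4 * R) := by
    rw [norm_smul, Real.norm_eq_abs, abs_div, abs_two]
    have : ‖(x - c) + (y - c)‖ ≤ 4 * R := by
      calc ‖(x - c) + (y - c)‖ ≤ ‖x - c‖ + ‖y - c‖ := norm_add_le _ _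
      _ ≤ 4 * R := by linarith
    apply mul_le_mul_of_nonneg_left this
    positivity
  have he1p : 0 < e1 := Real.exp_pos _
  have he2p : 0 < e2 := Real.exp_pos _
  nlinarith [norm_nonneg (x - y), abs_nonneg (e1 - e2), mul_le_mul_of_nonneg_right hE (by positivity : (0:ℝ) ≤ 2 * R)]

set_option maxHeartbeats 2000000 in
lemma key_lemma {d : ℕ} (R p : ℝ) (hR : 0 < R) (hp : 1 ≤ p)
    (μ μ' : Measure (EuclideanSpace ℝ (Fin d)))
    [IsProbabilityMeasure μ] [IsProbabilityMeasure μ']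
    (hμ : μ (Metric.closedBall 0 R) = 1) (hμ' : μ' (Metric.closedBall 0 R) = 1)
    (z : EuclideanSpace ℝ (Fin d))
    (π : Measure (EuclideanSpace ℝ (Fin d) × EuclideanSpace ℝ (Fin d)))
    [IsProbabilityMeasure π] (hfst : π.fst = μ) (hsnd : π.snd = μ')
    (hba : gamma2 z μ' ≤ gamma2 z μ) :
    ‖gammaAttn z μ - gammaAttn z μ'‖ ≤
      (1 + 2 * R * ‖z‖) * Real.exp (2 * R * ‖z‖ / p) *
        (∫ q, ‖q.1 - q.2‖ ^ p ∂π) ^ (1 / p) := by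
  have hE : (0:ℕ) = 0 := rfl
  -- continuity of the exponential weight
  have hfc : Continuous (fun x : EuclideanSpace ℝ (Fin d) => Real.exp ⟪z, x⟫) :=
    Real.continuous_exp.comp (continuous_const.inner continuous_id)
  -- a.e. ball membership
  have hxa : ∀ᵐ x ∂μ, ‖x‖ ≤ R := by
    have h0 : μ (Metric.closedBall (0:EuclideanSpace ℝ (Fin d)) R)ᶜ = 0 := by
      rw [measure_compl measurableSet_closedBall (measure_ne_top _ _), hμ,
        measure_univ, tsub_self]
    filter_upwards [measure_eq_zero_iff_ae_notMem.mp h0] with x hx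
    have hx' : x ∈ Metric.closedBall (0:EuclideanSpace ℝ (Fin d)) R := Set.not_notMem.mp hx
    simpa [Metric.mem_closedBall, dist_zero_right] using hx'
  have hya : ∀ᵐ y ∂μ', ‖y‖ ≤ R := by
    have h0 : μ' (Metric.closedBall (0:EuclideanSpace ℝ (Fin d)) R)ᶜ = 0 := by
      rw [measure_compl measurableSet_closedBall (measure_ne_top _ _), hμ',
        measure_univ, tsub_self]
    filter_upwards [measure_eq_zero_iff_ae_notMem.mp h0] with x hx
    have hx' : x ∈ Metric.closedBall (0:EuclideanSpace ℝ (Fin d)) R := Set.not_notMem.mp hx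
    simpa [Metric.mem_closedBall, dist_zero_right] using hx'
  have hπa : ∀ᵐ q ∂π, ‖q.1‖ ≤ R ∧ ‖q.2‖ ≤ R := by
    have c1 : π (Prod.fst ⁻¹' Metric.closedBall (0:EuclideanSpace ℝ (Fin d)) R)ᶜ = 0 := by
      rw [measure_compl (measurableSet_closedBall.preimage measurable_fst)
        (measure_ne_top _ _), ← Measure.fst_apply measurableSet_closedBall,
        hfst, hμ, measure_univ, tsub_self]
    have c2 : π (Prod.snd ⁻¹' Metric.closedBall (0:EuclideanSpace ℝ (Fin d)) R)ᶜ = 0 := by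
      rw [measure_compl (measurableSet_closedBall.preimage measurable_snd)
        (measure_ne_top _ _), ← Measure.snd_apply measurableSet_closedBall,
        hsnd, hμ', measure_univ, tsub_self]
    filter_upwards [measure_eq_zero_iff_ae_notMem.mp c1, measure_eq_zero_iff_ae_notMem.mp c2] with q h1 h2
    have h1' : q.1 ∈ Metric.closedBall (0:EuclideanSpace ℝ (Fin d)) R := Set.not_notMem.mp h1
    have h2' : q.2 ∈ Metric.closedBall (0:EuclideanSpace ℝ (Fin d)) R := Set.not_notMem.mp h2
    constructor
    · simpa [Metric.mem_closedBall, dist_zero_right] using h1'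
    · simpa [Metric.mem_closedBall, dist_zero_right] using h2'
  -- bounds on the weight
  have hfub : ∀ x : EuclideanSpace ℝ (Fin d), ‖x‖ ≤ R → Real.exp ⟪z, x⟫ ≤ Real.exp (R * ‖z‖) := by
    intro x hx
    apply Real.exp_le_exp.mpr
    calc ⟪z, x⟫ ≤ |⟪z, x⟫| := le_abs_self _
      _ ≤ ‖z‖ * ‖x‖ := abs_real_inner_le_norm z x
      _ ≤ ‖z‖ * R := mul_le_mul_of_nonneg_left hx (norm_nonneg z)
      _ = R * ‖z‖ := mul_comm _ _
  have hflb : ∀ x : EuclideanSpace ℝ (Fin d), ‖x‖ ≤ R → Real.exp (-(R * ‖z‖)) ≤ Real.exp ⟪z, x⟫ := by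
    intro x hx
    apply Real.exp_le_exp.mpr
    have h1 : |⟪z, x⟫| ≤ R * ‖z‖ := by
      calc |⟪z, x⟫| ≤ ‖z‖ * ‖x‖ := abs_real_inner_le_norm z x
        _ ≤ ‖z‖ * R := mul_le_mul_of_nonneg_left hx (norm_nonneg z)
        _ = R * ‖z‖ := mul_comm _ _
    have := neg_abs_le ⟪z, x⟫
    linarith [abs_le.mp h1]
  -- integrability over μ and μ'
  have hint_f : Integrable (fun x : EuclideanSpace ℝ (Fin d) => Real.exp ⟪z, x⟫) μ := by
    refine (integrable_const (Real.exp (R * ‖z‖))).mono' hfc.aestronglyMeasurable ?_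
    filter_upwards [hxa] with x hx
    rw [Real.norm_eq_abs, abs_of_pos (Real.exp_pos _)]
    exact hfub x hx
  have hint_f' : Integrable (fun x : EuclideanSpace ℝ (Fin d) => Real.exp ⟪z, x⟫) μ' := by
    refine (integrable_const (Real.exp (R * ‖z‖))).mono' hfc.aestronglyMeasurable ?_
    filter_upwards [hya] with x hx
    rw [Real.norm_eq_abs, abs_of_pos (Real.exp_pos _)]
    exact hfub x hx
  have hfvc : Continuous (fun x : EuclideanSpace ℝ (Fin d) => Real.exp ⟪z, x⟫ • x) := hfc.smul continuous_id
  have hint_fv' : Integrable (fun x : EuclideanSpace ℝ (Fin d) => Real.exp ⟪z, x⟫ • x) μ' := by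
    refine (integrable_const (Real.exp (R * ‖z‖) * R)).mono' hfvc.aestronglyMeasurable ?_
    filter_upwards [hya] with x hx
    rw [norm_smul, Real.norm_eq_abs, abs_of_pos (Real.exp_pos _)]
    exact mul_le_mul (hfub x hx) hx (norm_nonneg x) (Real.exp_pos _).le
  -- positivity of the normalisations
  have ha_lb : Real.exp (-(R * ‖z‖)) ≤ gamma2 z μ := by
    have h := integral_mono_ae (integrable_const (Real.exp (-(R * ‖z‖)))) hint_f
      (by filter_upwards [hxa] with x hx; exact hflb x hx)
    simpa [gamma2] using h
  have hb_lb : Real.exp (-(R * ‖z‖)) ≤ gamma2 z μ' := by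
    have h := integral_mono_ae (integrable_const (Real.exp (-(R * ‖z‖)))) hint_f'
      (by filter_upwards [hya] with x hx; exact hflb x hx)
    simpa [gamma2] using h
  have ha : 0 < gamma2 z μ := lt_of_lt_of_le (Real.exp_pos _) ha_lb
  have hb : 0 < gamma2 z μ' := lt_of_lt_of_le (Real.exp_pos _) hb_lb
  -- bound on the attention of μ'
  have hcR : ‖gammaAttn z μ'‖ ≤ R := by
    have hnB : ‖∫ y, Real.exp ⟪z, y⟫ • y ∂μ'‖ ≤ R * gamma2 z μ' := by
      calc ‖∫ y, Real.exp ⟪z, y⟫ • y ∂μ'‖ ≤ ∫ y, ‖Real.exp ⟪z, y⟫ • y‖ ∂μ' :=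
            norm_integral_le_integral_norm _
        _ ≤ ∫ y, R * Real.exp ⟪z, y⟫ ∂μ' := by
            refine integral_mono_ae hint_fv'.norm (hint_f'.const_mul R) ?_
            filter_upwards [hya] with y hy
            rw [norm_smul, Real.norm_eq_abs, abs_of_pos (Real.exp_pos _), mul_comm]
            exact mul_le_mul_of_nonneg_right hy (Real.exp_pos _).le
        _ = R * gamma2 z μ' := by rw [integral_const_mul]; rfl
    rw [gammaAttn, norm_smul, Real.norm_eq_abs, abs_of_pos (inv_pos.mpr hb)]
    calc (gamma2 z μ')⁻¹ * ‖∫ y, Real.exp ⟪z, y⟫ • y ∂μ'‖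
        ≤ (gamma2 z μ')⁻¹ * (R * gamma2 z μ') :=
          mul_le_mul_of_nonneg_left hnB (inv_pos.mpr hb).le
      _ = R := by field_simp
  -- marginal identities
  have ha1 : ∫ q, Real.exp ⟪z, q.1⟫ ∂π = gamma2 z μ := by
    rw [gamma2, ← hfst, Measure.fst,
      integral_map measurable_fst.aemeasurable hfc.aestronglyMeasurable]
  have hb1 : ∫ q, Real.exp ⟪z, q.2⟫ ∂π = gamma2 z μ' := by
    rw [gamma2, ← hsnd, Measure.snd,
      integral_map measurable_snd.aemeasurable hfc.aestronglyMeasurable]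
  have ha1v : ∫ q, Real.exp ⟪z, q.1⟫ • q.1 ∂π = ∫ x, Real.exp ⟪z, x⟫ • x ∂μ := by
    rw [← hfst, Measure.fst,
      integral_map measurable_fst.aemeasurable hfvc.aestronglyMeasurable]
  have hb1v : ∫ q, Real.exp ⟪z, q.2⟫ • q.2 ∂π = ∫ y, Real.exp ⟪z, y⟫ • y ∂μ' := by
    rw [← hsnd, Measure.snd,
      integral_map measurable_snd.aemeasurable hfvc.aestronglyMeasurable]
  -- integrability over π
  have hπf1 : Integrable (fun q : EuclideanSpace ℝ (Fin d) × EuclideanSpace ℝ (Fin d) => Real.exp ⟪z, q.1⟫) π := by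
    refine (integrable_const (Real.exp (R * ‖z‖))).mono'
      (hfc.comp continuous_fst).aestronglyMeasurable ?_
    filter_upwards [hπa] with q hq
    rw [Real.norm_eq_abs, abs_of_pos (Real.exp_pos _)]
    exact hfub q.1 hq.1
  have hπf2 : Integrable (fun q : EuclideanSpace ℝ (Fin d) × EuclideanSpace ℝ (Fin d) => Real.exp ⟪z, q.2⟫) π := by
    refine (integrable_const (Real.exp (R * ‖z‖))).mono'
      (hfc.comp continuous_snd).aestronglyMeasurable ?_
    filter_upwards [hπa] with q hq
    rw [Real.norm_eq_abs, abs_of_pos (Real.exp_pos _)]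
    exact hfub q.2 hq.2
  have hπfv1 : Integrable (fun q : EuclideanSpace ℝ (Fin d) × EuclideanSpace ℝ (Fin d) => Real.exp ⟪z, q.1⟫ • q.1) π := by
    refine (integrable_const (Real.exp (R * ‖z‖) * R)).mono'
      (hfvc.comp continuous_fst).aestronglyMeasurable ?_
    filter_upwards [hπa] with q hq
    rw [norm_smul, Real.norm_eq_abs, abs_of_pos (Real.exp_pos _)]
    exact mul_le_mul (hfub q.1 hq.1) hq.1 (norm_nonneg _) (Real.exp_pos _).le
  have hπfv2 : Integrable (fun q : EuclideanSpace ℝ (Fin d) × EuclideanSpace ℝ (Fin d) => Real.exp ⟪z, q.2⟫ • q.2) π := by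
    refine (integrable_const (Real.exp (R * ‖z‖) * R)).mono'
      (hfvc.comp continuous_snd).aestronglyMeasurable ?_
    filter_upwards [hπa] with q hq
    rw [norm_smul, Real.norm_eq_abs, abs_of_pos (Real.exp_pos _)]
    exact mul_le_mul (hfub q.2 hq.2) hq.2 (norm_nonneg _) (Real.exp_pos _).le
  have hπd1 : Integrable (fun q : EuclideanSpace ℝ (Fin d) × EuclideanSpace ℝ (Fin d) => Real.exp ⟪z, q.1⟫ • (q.1 - gammaAttn z μ')) π := by
    simp only [smul_sub]
    exact hπfv1.sub (hπf1.smul_const _)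
  have hπd2 : Integrable (fun q : EuclideanSpace ℝ (Fin d) × EuclideanSpace ℝ (Fin d) => Real.exp ⟪z, q.2⟫ • (q.2 - gammaAttn z μ')) π := by
    simp only [smul_sub]
    exact hπfv2.sub (hπf2.smul_const _)
  -- the key identity
  have e1 : ∫ q, Real.exp ⟪z, q.1⟫ • (q.1 - gammaAttn z μ') ∂π
      = (∫ q, Real.exp ⟪z, q.1⟫ • q.1 ∂π)
        - (∫ q, Real.exp ⟪z, q.1⟫ ∂π) • gammaAttn z μ' := by
    simp_rw [smul_sub]
    rw [integral_sub hπfv1 (hπf1.smul_const _), integral_smul_const]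
  have e2 : ∫ q, Real.exp ⟪z, q.2⟫ • (q.2 - gammaAttn z μ') ∂π
      = (∫ q, Real.exp ⟪z, q.2⟫ • q.2 ∂π)
        - (∫ q, Real.exp ⟪z, q.2⟫ ∂π) • gammaAttn z μ' := by
    simp_rw [smul_sub]
    rw [integral_sub hπfv2 (hπf2.smul_const _), integral_smul_const]
  have hBc : ∫ y, Real.exp ⟪z, y⟫ • y ∂μ' = (gamma2 z μ') • gammaAttn z μ' := by
    rw [gammaAttn, smul_smul, mul_inv_cancel₀ hb.ne', one_smul]
  have hid : gammaAttn z μ - gammaAttn z μ' =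
      (gamma2 z μ)⁻¹ • ∫ q, (Real.exp ⟪z, q.1⟫ • (q.1 - gammaAttn z μ')
        - Real.exp ⟪z, q.2⟫ • (q.2 - gammaAttn z μ')) ∂π := by
    rw [integral_sub hπd1 hπd2, e1, e2, ha1, hb1, ha1v, hb1v, hBc, sub_self, sub_zero,
      smul_sub, smul_smul, inv_mul_cancel₀ ha.ne', one_smul]
    simp only [gammaAttn]
  -- integrability of the dominating integrands
  have hwc : Continuous (fun q : EuclideanSpace ℝ (Fin d) × EuclideanSpace ℝ (Fin d) => ‖q.1 - q.2‖) :=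
    (continuous_fst.sub continuous_snd).norm
  have hπkw : Integrable (fun q : EuclideanSpace ℝ (Fin d) × EuclideanSpace ℝ (Fin d) =>
      (1 + 2 * R * ‖z‖) * ((Real.exp ⟪z, q.1⟫ + Real.exp ⟪z, q.2⟫) / 2) * ‖q.1 - q.2‖) π := by
    have : Continuous (fun q : EuclideanSpace ℝ (Fin d) × EuclideanSpace ℝ (Fin d) =>
        (1 + 2 * R * ‖z‖) * ((Real.exp ⟪z, q.1⟫ + Real.exp ⟪z, q.2⟫) / 2) * ‖q.1 - q.2‖) :=
      (continuous_const.mul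
        (((hfc.comp continuous_fst).add (hfc.comp continuous_snd)).div_const 2)).mul
        ((continuous_fst.sub continuous_snd).norm)
    refine (integrable_const ((1 + 2 * R * ‖z‖) * Real.exp (R * ‖z‖) * (2 * R))).mono'
      this.aestronglyMeasurable ?_
    filter_upwards [hπa] with q hq
    have h1 := hfub q.1 hq.1
    have h2 := hfub q.2 hq.2
    have h3 : ‖q.1 - q.2‖ ≤ 2 * R := by
      calc ‖q.1 - q.2‖ ≤ ‖q.1‖ + ‖q.2‖ := norm_sub_le _ _
        _ ≤ 2 * R := by linarith [hq.1, hq.2]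
    have hz0 : (0:ℝ) ≤ 1 + 2 * R * ‖z‖ := by positivity
    rw [Real.norm_eq_abs, abs_of_nonneg (by positivity)]
    have hA : (Real.exp ⟪z, q.1⟫ + Real.exp ⟪z, q.2⟫) / 2 ≤ Real.exp (R * ‖z‖) := by
      linarith
    exact mul_le_mul (mul_le_mul_of_nonneg_left hA hz0) h3 (norm_nonneg _) (by positivity)
  -- norm bound via the pointwise estimate
  have hnorm : ‖gammaAttn z μ - gammaAttn z μ'‖ ≤
      (gamma2 z μ)⁻¹ * ∫ q, (1 + 2 * R * ‖z‖) *
        ((Real.exp ⟪z, q.1⟫ + Real.exp ⟪z, q.2⟫) / 2) * ‖q.1 - q.2‖ ∂π := by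
    rw [hid, norm_smul, Real.norm_eq_abs, abs_of_pos (inv_pos.mpr ha)]
    refine mul_le_mul_of_nonneg_left ?_ (inv_pos.mpr ha).le
    calc ‖∫ q, (Real.exp ⟪z, q.1⟫ • (q.1 - gammaAttn z μ')
          - Real.exp ⟪z, q.2⟫ • (q.2 - gammaAttn z μ')) ∂π‖
        ≤ ∫ q, ‖Real.exp ⟪z, q.1⟫ • (q.1 - gammaAttn z μ')
          - Real.exp ⟪z, q.2⟫ • (q.2 - gammaAttn z μ')‖ ∂π := norm_integral_le_integral_norm _
      _ ≤ ∫ q, (1 + 2 * R * ‖z‖) *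
          ((Real.exp ⟪z, q.1⟫ + Real.exp ⟪z, q.2⟫) / 2) * ‖q.1 - q.2‖ ∂π := by
          refine integral_mono_ae (hπd1.sub hπd2).norm hπkw ?_
          filter_upwards [hπa] with q hq
          exact pointwise_bound' z q.1 q.2 _ hq.1 hq.2 hcR
  -- rewrite with the normalised density k
  have hI : (gamma2 z μ)⁻¹ * ∫ q, (1 + 2 * R * ‖z‖) *
      ((Real.exp ⟪z, q.1⟫ + Real.exp ⟪z, q.2⟫) / 2) * ‖q.1 - q.2‖ ∂π
      = (1 + 2 * R * ‖z‖) *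
        ∫ q, (Real.exp ⟪z, q.1⟫ + Real.exp ⟪z, q.2⟫) / (2 * gamma2 z μ) * ‖q.1 - q.2‖ ∂π := by
    have hrw : ∀ q : EuclideanSpace ℝ (Fin d) × EuclideanSpace ℝ (Fin d), (1 + 2 * R * ‖z‖) *
        ((Real.exp ⟪z, q.1⟫ + Real.exp ⟪z, q.2⟫) / 2) * ‖q.1 - q.2‖
        = (gamma2 z μ) * ((1 + 2 * R * ‖z‖) *
          ((Real.exp ⟪z, q.1⟫ + Real.exp ⟪z, q.2⟫) / (2 * gamma2 z μ) * ‖q.1 - q.2‖)) := by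
      intro q
      field_simp
    simp_rw [hrw]
    rw [integral_const_mul, integral_const_mul, ← mul_assoc, inv_mul_cancel₀ ha.ne', one_mul]
  -- mass of k is at most 1
  have hmass : ∫ q, (Real.exp ⟪z, q.1⟫ + Real.exp ⟪z, q.2⟫) / (2 * gamma2 z μ) ∂π ≤ 1 := by
    have hval : ∫ q, (Real.exp ⟪z, q.1⟫ + Real.exp ⟪z, q.2⟫) / (2 * gamma2 z μ) ∂π
        = (gamma2 z μ + gamma2 z μ') / (2 * gamma2 z μ) := by
      simp_rw [div_eq_mul_inv]
      rw [integral_mul_const, integral_add hπf1 hπf2, ha1, hb1]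
    rw [hval, div_le_one (by positivity)]
    linarith
  -- a.e. bound on k
  have hkbd : ∀ᵐ q ∂π, (Real.exp ⟪z, q.1⟫ + Real.exp ⟪z, q.2⟫) / (2 * gamma2 z μ)
      ≤ Real.exp (2 * R * ‖z‖) := by
    filter_upwards [hπa] with q hq
    have h1 := hfub q.1 hq.1
    have h2 := hfub q.2 hq.2
    have h5 : Real.exp (2 * R * ‖z‖) * Real.exp (-(R * ‖z‖)) = Real.exp (R * ‖z‖) := by
      rw [← Real.exp_add]; ring_nf
    rw [div_le_iff₀ (by positivity)]
    have h6 : Real.exp (2 * R * ‖z‖) * Real.exp (-(R * ‖z‖)) ≤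
        Real.exp (2 * R * ‖z‖) * gamma2 z μ :=
      mul_le_mul_of_nonneg_left ha_lb (Real.exp_pos _).le
    nlinarith
  -- positivity and measurability of k
  have hk_cont : Continuous (fun q : EuclideanSpace ℝ (Fin d) × EuclideanSpace ℝ (Fin d) =>
      (Real.exp ⟪z, q.1⟫ + Real.exp ⟪z, q.2⟫) / (2 * gamma2 z μ)) :=
    ((hfc.comp continuous_fst).add (hfc.comp continuous_snd)).div_const _
  have hk_pos : ∀ q : EuclideanSpace ℝ (Fin d) × EuclideanSpace ℝ (Fin d),
      0 < (Real.exp ⟪z, q.1⟫ + Real.exp ⟪z, q.2⟫) / (2 * gamma2 z μ) := by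
    intro q
    have := Real.exp_pos ⟪z, q.1⟫
    have := Real.exp_pos ⟪z, q.2⟫
    positivity
  -- Hölder step
  have hw_bd : ∀ᵐ q ∂π, ‖q.1 - q.2‖ ≤ 2 * R := by
    filter_upwards [hπa] with q hq
    calc ‖q.1 - q.2‖ ≤ ‖q.1‖ + ‖q.2‖ := norm_sub_le _ _
      _ ≤ 2 * R := by linarith [hq.1, hq.2]
  have hE2p : Real.exp (2 * R * ‖z‖) ^ (1 / p) = Real.exp (2 * R * ‖z‖ / p) := by
    rw [Real.rpow_def_of_pos (Real.exp_pos _), Real.log_exp, mul_one_div]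
  have hk_meas : Continuous (fun q : EuclideanSpace ℝ (Fin d) × EuclideanSpace ℝ (Fin d) =>
      (Real.exp ⟪z, q.1⟫ + Real.exp ⟪z, q.2⟫) / (2 * gamma2 z μ)) := hk_cont
  have int_w : Integrable (fun q : EuclideanSpace ℝ (Fin d) × EuclideanSpace ℝ (Fin d) =>
      ‖q.1 - q.2‖) π := by
    refine (integrable_const (2 * R)).mono' hwc.aestronglyMeasurable ?_
    filter_upwards [hw_bd] with q hq
    rwa [Real.norm_eq_abs, abs_of_nonneg (norm_nonneg _)]
  have hwpc : Continuous (fun q : EuclideanSpace ℝ (Fin d) × EuclideanSpace ℝ (Fin d) =>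
      ‖q.1 - q.2‖ ^ p) :=
    hwc.rpow_const (fun q => Or.inr (by linarith))
  have int_wp : Integrable (fun q : EuclideanSpace ℝ (Fin d) × EuclideanSpace ℝ (Fin d) =>
      ‖q.1 - q.2‖ ^ p) π := by
    refine (integrable_const ((2 * R) ^ p)).mono' hwpc.aestronglyMeasurable ?_
    filter_upwards [hw_bd] with q hq
    rw [Real.norm_eq_abs, abs_of_nonneg (Real.rpow_nonneg (norm_nonneg _) _)]
    exact Real.rpow_le_rpow (norm_nonneg _) hq (by linarith)
  have int_kw : Integrable (fun q : EuclideanSpace ℝ (Fin d) × EuclideanSpace ℝ (Fin d) =>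
      (Real.exp ⟪z, q.1⟫ + Real.exp ⟪z, q.2⟫) / (2 * gamma2 z μ) * ‖q.1 - q.2‖) π := by
    refine (integrable_const (Real.exp (2 * R * ‖z‖) * (2 * R))).mono'
      (hk_cont.mul hwc).aestronglyMeasurable ?_
    filter_upwards [hkbd, hw_bd] with q hq hw'
    rw [Real.norm_eq_abs, abs_of_nonneg (mul_nonneg (hk_pos q).le (norm_nonneg _))]
    exact mul_le_mul hq hw' (norm_nonneg _) (Real.exp_pos _).le
  have int_kwp : Integrable (fun q : EuclideanSpace ℝ (Fin d) × EuclideanSpace ℝ (Fin d) =>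
      (Real.exp ⟪z, q.1⟫ + Real.exp ⟪z, q.2⟫) / (2 * gamma2 z μ) * ‖q.1 - q.2‖ ^ p) π := by
    refine (integrable_const (Real.exp (2 * R * ‖z‖) * (2 * R) ^ p)).mono'
      (hk_cont.mul hwpc).aestronglyMeasurable ?_
    filter_upwards [hkbd, hw_bd] with q hq hw'
    rw [Real.norm_eq_abs,
      abs_of_nonneg (mul_nonneg (hk_pos q).le (Real.rpow_nonneg (norm_nonneg _) _))]
    exact mul_le_mul hq (Real.rpow_le_rpow (norm_nonneg _) hw' (by linarith))
      (Real.rpow_nonneg (norm_nonneg _) _) (Real.exp_pos _).le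
  have hwp_nonneg : (0:ℝ) ≤ ∫ q, ‖q.1 - q.2‖ ^ p ∂π :=
    integral_nonneg (fun q => Real.rpow_nonneg (norm_nonneg _) _)
  have hkwp_le : ∫ q, (Real.exp ⟪z, q.1⟫ + Real.exp ⟪z, q.2⟫) / (2 * gamma2 z μ)
      * ‖q.1 - q.2‖ ^ p ∂π ≤ Real.exp (2 * R * ‖z‖) * ∫ q, ‖q.1 - q.2‖ ^ p ∂π := by
    have h := integral_mono_ae int_kwp (int_wp.const_mul (Real.exp (2 * R * ‖z‖))) ?_
    · rwa [integral_const_mul] at h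
    · filter_upwards [hkbd] with q hq
      exact mul_le_mul_of_nonneg_right hq (Real.rpow_nonneg (norm_nonneg _) _)
  have hHolder : ∫ q, (Real.exp ⟪z, q.1⟫ + Real.exp ⟪z, q.2⟫) / (2 * gamma2 z μ)
        * ‖q.1 - q.2‖ ∂π ≤
      Real.exp (2 * R * ‖z‖ / p) * (∫ q, ‖q.1 - q.2‖ ^ p ∂π) ^ (1 / p) := by
    rcases eq_or_lt_of_le hp with hp1 | hp1
    · -- p = 1
      have h := integral_mono_ae int_kw (int_w.const_mul (Real.exp (2 * R * ‖z‖))) ?_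
      · rw [integral_const_mul] at h
        rw [← hp1]
        simp only [Real.rpow_one, div_one, one_div_one]
        exact h
      · filter_upwards [hkbd] with q hq
        exact mul_le_mul_of_nonneg_right hq (norm_nonneg _)
    · -- 1 < p
      have hpq : p.HolderConjugate (p / (p - 1)) := Real.HolderConjugate.conjExponent hp1
      set q0 := p / (p - 1) with hq0def
      have hq0pos : 0 < q0 := hpq.symm.pos
      have hppos : 0 < p := hpq.pos
      have hsum : 1 / q0 + 1 / p = 1 := by
        rw [one_div, one_div]
        exact hpq.symm.inv_add_inv_eq_one
      have hfmem : MemLp (fun q : EuclideanSpace ℝ (Fin d) × EuclideanSpace ℝ (Fin d) =>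
          ((Real.exp ⟪z, q.1⟫ + Real.exp ⟪z, q.2⟫) / (2 * gamma2 z μ)) ^ (1 / q0))
          (ENNReal.ofReal q0) π := by
        refine MemLp.of_bound ?_ (Real.exp (2 * R * ‖z‖) ^ (1 / q0)) ?_
        · exact (hk_cont.rpow_const (fun q => Or.inr (by positivity))).aestronglyMeasurable
        · filter_upwards [hkbd] with q hq
          rw [Real.norm_eq_abs, abs_of_nonneg (Real.rpow_nonneg (hk_pos q).le _)]
          exact Real.rpow_le_rpow (hk_pos q).le hq (by positivity)
      have hgmem : MemLp (fun q : EuclideanSpace ℝ (Fin d) × EuclideanSpace ℝ (Fin d) =>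
          ((Real.exp ⟪z, q.1⟫ + Real.exp ⟪z, q.2⟫) / (2 * gamma2 z μ)) ^ (1 / p)
          * ‖q.1 - q.2‖) (ENNReal.ofReal p) π := by
        refine MemLp.of_bound ?_ (Real.exp (2 * R * ‖z‖) ^ (1 / p) * (2 * R)) ?_
        · exact ((hk_cont.rpow_const (fun q => Or.inr (by positivity))).mul
            hwc).aestronglyMeasurable
        · filter_upwards [hkbd, hw_bd] with q hq hw'
          rw [Real.norm_eq_abs,
            abs_of_nonneg (mul_nonneg (Real.rpow_nonneg (hk_pos q).le _) (norm_nonneg _))]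
          exact mul_le_mul (Real.rpow_le_rpow (hk_pos q).le hq (by positivity)) hw'
            (norm_nonneg _) (by positivity)
      have hH := integral_mul_le_Lp_mul_Lq_of_nonneg hpq.symm
        (ae_of_all _ fun q => Real.rpow_nonneg (hk_pos q).le _)
        (ae_of_all _ fun q =>
          mul_nonneg (Real.rpow_nonneg (hk_pos q).le _) (norm_nonneg _))
        hfmem hgmem
      -- rewrite LHS of Hölder
      have eA : ∀ q : EuclideanSpace ℝ (Fin d) × EuclideanSpace ℝ (Fin d),
          ((Real.exp ⟪z, q.1⟫ + Real.exp ⟪z, q.2⟫) / (2 * gamma2 z μ)) ^ (1 / q0) *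
            (((Real.exp ⟪z, q.1⟫ + Real.exp ⟪z, q.2⟫) / (2 * gamma2 z μ)) ^ (1 / p)
              * ‖q.1 - q.2‖)
          = (Real.exp ⟪z, q.1⟫ + Real.exp ⟪z, q.2⟫) / (2 * gamma2 z μ) * ‖q.1 - q.2‖ := by
        intro q
        rw [← mul_assoc, ← Real.rpow_add (hk_pos q), hsum, Real.rpow_one]
      have eB : ∀ q : EuclideanSpace ℝ (Fin d) × EuclideanSpace ℝ (Fin d),
          (((Real.exp ⟪z, q.1⟫ + Real.exp ⟪z, q.2⟫) / (2 * gamma2 z μ)) ^ (1 / q0)) ^ q0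
          = (Real.exp ⟪z, q.1⟫ + Real.exp ⟪z, q.2⟫) / (2 * gamma2 z μ) := by
        intro q
        rw [← Real.rpow_mul (hk_pos q).le, one_div_mul_cancel hq0pos.ne', Real.rpow_one]
      have eC : ∀ q : EuclideanSpace ℝ (Fin d) × EuclideanSpace ℝ (Fin d),
          (((Real.exp ⟪z, q.1⟫ + Real.exp ⟪z, q.2⟫) / (2 * gamma2 z μ)) ^ (1 / p)
            * ‖q.1 - q.2‖) ^ p
          = (Real.exp ⟪z, q.1⟫ + Real.exp ⟪z, q.2⟫) / (2 * gamma2 z μ)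
            * ‖q.1 - q.2‖ ^ p := by
        intro q
        rw [Real.mul_rpow (Real.rpow_nonneg (hk_pos q).le _) (norm_nonneg _),
          ← Real.rpow_mul (hk_pos q).le, one_div_mul_cancel hppos.ne', Real.rpow_one]
      simp_rw [eA, eB, eC] at hH
      have hfac1 : (∫ q, (Real.exp ⟪z, q.1⟫ + Real.exp ⟪z, q.2⟫)
          / (2 * gamma2 z μ) ∂π) ^ (1 / q0) ≤ 1 :=
        Real.rpow_le_one (integral_nonneg fun q => (hk_pos q).le) hmass (by positivity)
      have hfac2 : (∫ q, (Real.exp ⟪z, q.1⟫ + Real.exp ⟪z, q.2⟫) / (2 * gamma2 z μ)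
            * ‖q.1 - q.2‖ ^ p ∂π) ^ (1 / p)
          ≤ Real.exp (2 * R * ‖z‖ / p) * (∫ q, ‖q.1 - q.2‖ ^ p ∂π) ^ (1 / p) := by
        calc (∫ q, (Real.exp ⟪z, q.1⟫ + Real.exp ⟪z, q.2⟫) / (2 * gamma2 z μ)
              * ‖q.1 - q.2‖ ^ p ∂π) ^ (1 / p)
            ≤ (Real.exp (2 * R * ‖z‖) * ∫ q, ‖q.1 - q.2‖ ^ p ∂π) ^ (1 / p) :=
              Real.rpow_le_rpow (integral_nonneg fun q =>
                mul_nonneg (hk_pos q).le (Real.rpow_nonneg (norm_nonneg _) _))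
                hkwp_le (by positivity)
          _ = Real.exp (2 * R * ‖z‖ / p) * (∫ q, ‖q.1 - q.2‖ ^ p ∂π) ^ (1 / p) := by
              rw [Real.mul_rpow (Real.exp_pos _).le hwp_nonneg, hE2p]
      calc ∫ q, (Real.exp ⟪z, q.1⟫ + Real.exp ⟪z, q.2⟫) / (2 * gamma2 z μ)
            * ‖q.1 - q.2‖ ∂π
          ≤ (∫ q, (Real.exp ⟪z, q.1⟫ + Real.exp ⟪z, q.2⟫) / (2 * gamma2 z μ) ∂π) ^ (1 / q0) *
            (∫ q, (Real.exp ⟪z, q.1⟫ + Real.exp ⟪z, q.2⟫) / (2 * gamma2 z μ)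
              * ‖q.1 - q.2‖ ^ p ∂π) ^ (1 / p) := hH
        _ ≤ 1 * (Real.exp (2 * R * ‖z‖ / p) * (∫ q, ‖q.1 - q.2‖ ^ p ∂π) ^ (1 / p)) := by
            refine mul_le_mul hfac1 hfac2 (Real.rpow_nonneg (integral_nonneg fun q =>
              mul_nonneg (hk_pos q).le (Real.rpow_nonneg (norm_nonneg _) _)) _) zero_le_one
        _ = Real.exp (2 * R * ‖z‖ / p) * (∫ q, ‖q.1 - q.2‖ ^ p ∂π) ^ (1 / p) := one_mul _
  -- combine
  calc ‖gammaAttn z μ - gammaAttn z μ'‖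
      ≤ (gamma2 z μ)⁻¹ * ∫ q, (1 + 2 * R * ‖z‖) *
        ((Real.exp ⟪z, q.1⟫ + Real.exp ⟪z, q.2⟫) / 2) * ‖q.1 - q.2‖ ∂π := hnorm
    _ = (1 + 2 * R * ‖z‖) *
        ∫ q, (Real.exp ⟪z, q.1⟫ + Real.exp ⟪z, q.2⟫) / (2 * gamma2 z μ) * ‖q.1 - q.2‖ ∂π := hI
    _ ≤ (1 + 2 * R * ‖z‖) *
        (Real.exp (2 * R * ‖z‖ / p) * (∫ q, ‖q.1 - q.2‖ ^ p ∂π) ^ (1 / p)) := by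
        refine mul_le_mul_of_nonneg_left hHolder (by positivity)
    _ = (1 + 2 * R * ‖z‖) * Real.exp (2 * R * ‖z‖ / p) *
        (∫ q, ‖q.1 - q.2‖ ^ p ∂π) ^ (1 / p) := by ring

/-- `W_p`-Lipschitz continuity of `γ(z, ·)`: for probability measures `μ, μ'` supported in
`B̄(R)` and any coupling `π` of `μ` and `μ'`,
`‖γ(z,μ) − γ(z,μ')‖ ≤ (1 + 2R‖z‖) exp(2R‖z‖/p) (∫ ‖x − y‖^p dπ)^{1/p}`. -/
theorem stmt_4 {d : ℕ} (R p : ℝ) (hR : 0 < R) (hp : 1 ≤ p)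
    (μ μ' : Measure (EuclideanSpace ℝ (Fin d)))
    [IsProbabilityMeasure μ] [IsProbabilityMeasure μ']
    (hμ : μ (Metric.closedBall 0 R) = 1) (hμ' : μ' (Metric.closedBall 0 R) = 1)
    (z : EuclideanSpace ℝ (Fin d))
    (π : Measure (EuclideanSpace ℝ (Fin d) × EuclideanSpace ℝ (Fin d)))
    [IsProbabilityMeasure π] (hfst : π.fst = μ) (hsnd : π.snd = μ') :
    ‖gammaAttn z μ - gammaAttn z μ'‖ ≤
      (1 + 2 * R * ‖z‖) * Real.exp (2 * R * ‖z‖ / p) *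
        (∫ q, ‖q.1 - q.2‖ ^ p ∂π) ^ (1 / p) := by
  rcases le_total (gamma2 z μ') (gamma2 z μ) with hba | hba
  · exact key_lemma R p hR hp μ μ' hμ hμ' z π hfst hsnd hba
  · haveI : IsProbabilityMeasure (π.map Prod.swap) :=
      Measure.isProbabilityMeasure_map measurable_swap.aemeasurable
    have hfst' : (π.map Prod.swap).fst = μ' := by rw [Measure.fst_map_swap, hsnd]
    have hsnd' : (π.map Prod.swap).snd = μ := by rw [Measure.snd_map_swap, hfst]
    have h := key_lemma R p hR hp μ' μ hμ' hμ z (π.map Prod.swap) hfst' hsnd' hba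
    have hmeas : AEStronglyMeasurable
        (fun q : EuclideanSpace ℝ (Fin d) × EuclideanSpace ℝ (Fin d) => ‖q.1 - q.2‖ ^ p)
        (π.map Prod.swap) :=
      ((continuous_fst.sub continuous_snd).norm.rpow_const
        (fun q => Or.inr (by linarith))).aestronglyMeasurable
    have hint : ∫ q, ‖q.1 - q.2‖ ^ p ∂(π.map Prod.swap) = ∫ q, ‖q.1 - q.2‖ ^ p ∂π := by
      rw [integral_map measurable_swap.aemeasurable hmeas]
      simp only [Prod.fst_swap, Prod.snd_swap]
      refine integral_congr_ae (ae_of_all _ fun q => ?_)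
      show ‖q.2 - q.1‖ ^ p = ‖q.1 - q.2‖ ^ p
      rw [norm_sub_rev]
    rw [hint] at h
    rwa [norm_sub_rev] at h
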